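/- arXiv:2605.01237 — 2 statements merged into one kernel-verified Lean document; each statement's English description precedes it below -/
import Mathlib

section
/- Fix a location i∈[1:n] and λ≥0, and define the envelope quantities L^τ_i and U^τ_i (as extended reals). Then: (1) if τ∈(0,1), then −∞ < L^τ_i ≤ U^τ_i < ∞; (2) if τ=0 and λ>0, then L^0_i = −∞ and U^0_i = min_{k∈[1:n]} y_k; and if τ=1 and λ>0, then L^1_i = max_{k∈[1:n]} y_k and U^1_i = +∞. -/
open scoped BigOperators

noncomputable section

namespace QTVD

/-- Quantile (check) loss `ρ_τ(x) = max{τx, (τ-1)x}`. -/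
def qloss (τ x : ℝ) : ℝ := max (τ * x) ((τ - 1) * x)

/-- Total variation `TV(θ) = ∑ |θ_{i+1} - θ_i|` (coordinates indexed `0,…,n-1`). -/
def TV {n : ℕ} (θ : Fin n → ℝ) : ℝ :=
  ∑ i : Fin n, if h : (i : ℕ) + 1 < n then |θ ⟨(i : ℕ) + 1, h⟩ - θ i| else 0

/-- Quantile TVD objective. -/
def obj {n : ℕ} (τ lam : ℝ) (y θ : Fin n → ℝ) : ℝ :=
  (∑ i : Fin n, qloss τ (y i - θ i)) + lam * TV θ

/-- Quantile TVD solution set `S^τ`. -/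
def sol {n : ℕ} (τ lam : ℝ) (y : Fin n → ℝ) : Set (Fin n → ℝ) :=
  {θ | ∀ η : Fin n → ℝ, obj τ lam y θ ≤ obj τ lam y η}

/-- `k`-th smallest entry of `y` restricted to `I` (as extended real;
`⊥` if `k ≤ 0`, `⊤` if `k ≥ |I| + 1`). -/
def orderStat {n : ℕ} (y : Fin n → ℝ) (I : Finset (Fin n)) (k : ℤ) : EReal :=
  if k ≤ 0 then ⊥
  else if (I.card : ℤ) < k then ⊤
  else (((I.val.map y).sort (· ≤ ·)).getD (k.toNat - 1) 0 : ℝ)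

/-- The constant `C_{I,J}` for discrete intervals `I=[c:d] ⊆ J=[a:b] ⊆ [0:n-1]`
(0-based indexing; 1-based `[s:t] ⊆ [j1:j2] ⊆ [1:n]` corresponds to
`c = s-1, d = t-1, a = j1-1, b = j2-1`). -/
def Cconst (n c d a b : ℕ) : ℝ :=
  if 0 < a ∧ b < n - 1 then
    if a < c ∧ d < b then 1 else if c = a ∧ d = b then -1 else 0
  else if a = 0 ∧ b < n - 1 then
    if a < c ∧ d < b then 1 else if c = a ∧ d = b then -(1/2)
      else if c = 0 ∧ d < b then 1/2 else 0
  else if 0 < a ∧ b = n - 1 then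
    if a < c ∧ d < b then 1 else if c = a ∧ d = b then -(1/2)
      else if a < c ∧ d = b then 1/2 else 0
  else
    if a < c ∧ d < b then 1 else if c = a ∧ d = b then 0 else 1/2

/-- `u^τ_{I,J} = τ|I| - 2λ C_{I,J}` for `I=[c:d] ⊆ J=[a:b]`. -/
def uIJ (τ lam : ℝ) (n c d a b : ℕ) : ℝ :=
  τ * ((d : ℝ) - (c : ℝ) + 1) - 2 * lam * Cconst n c d a b

/-- `l^τ_{I,J} = τ|I| + 2λ C_{I,J}` for `I=[c:d] ⊆ J=[a:b]`. -/
def lIJ (τ lam : ℝ) (n c d a b : ℕ) : ℝ :=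
  τ * ((d : ℝ) - (c : ℝ) + 1) + 2 * lam * Cconst n c d a b

/-- Upper envelope `U^τ_i`: min over intervals `J ∋ i` of the max over
subintervals `I ⊆ J` with `i ∈ I` of `y_{I,(⌊u^τ_{I,J}⌋+1)}`. -/
def Uenv {n : ℕ} (τ lam : ℝ) (y : Fin n → ℝ) (i : Fin n) : EReal :=
  ⨅ (a : Fin n) (b : Fin n) (_ : a ≤ i) (_ : i ≤ b),
    ⨆ (c : Fin n) (d : Fin n) (_ : a ≤ c) (_ : c ≤ i) (_ : i ≤ d) (_ : d ≤ b),
      orderStat y (Finset.Icc c d) (⌊uIJ τ lam n (c : ℕ) (d : ℕ) (a : ℕ) (b : ℕ)⌋ + 1)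

/-- Lower envelope `L^τ_i`: max over intervals `J ∋ i` of the min over
subintervals `I ⊆ J` with `i ∈ I` of `y_{I,(⌈l^τ_{I,J}⌉)}`. -/
def Lenv {n : ℕ} (τ lam : ℝ) (y : Fin n → ℝ) (i : Fin n) : EReal :=
  ⨆ (a : Fin n) (b : Fin n) (_ : a ≤ i) (_ : i ≤ b),
    ⨅ (c : Fin n) (d : Fin n) (_ : a ≤ c) (_ : c ≤ i) (_ : i ≤ d) (_ : d ≤ b),
      orderStat y (Finset.Icc c d) ⌈lIJ τ lam n (c : ℕ) (d : ℕ) (a : ℕ) (b : ℕ)⌉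

/-- Admissible dual (KKT) variables `(g, z)` for a candidate solution `θ`.
`z` is indexed by `Fin (n+1)` (so `z 0,…,z n` with `z 0 = z n = 0`); the
edge between coordinates `j` and `j+1` (0-based) corresponds to `z (j+1)`. -/
def IsDual {n : ℕ} (τ lam : ℝ) (y θ : Fin n → ℝ) (g : Fin n → ℝ)
    (z : Fin (n + 1) → ℝ) : Prop :=
  z 0 = 0 ∧ z (Fin.last n) = 0 ∧
  (∀ j : Fin n, ∀ h : (j : ℕ) + 1 < n,
    (θ ⟨(j : ℕ) + 1, h⟩ < θ j → z j.succ = lam) ∧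
    (θ j = θ ⟨(j : ℕ) + 1, h⟩ → -lam ≤ z j.succ ∧ z j.succ ≤ lam) ∧
    (θ j < θ ⟨(j : ℕ) + 1, h⟩ → z j.succ = -lam)) ∧
  (∀ j : Fin n,
    (θ j < y j → g j = -τ) ∧
    (θ j = y j → -τ ≤ g j ∧ g j ≤ 1 - τ) ∧
    (y j < θ j → g j = 1 - τ)) ∧
  (∀ a b : Fin n, a ≤ b → (∑ j ∈ Finset.Icc a b, g j) = z a.castSucc - z b.succ)

/-- `sign_+(x) = 1` if `x ≥ 0`, `-1` if `x < 0`. -/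
def signP (x : ℝ) : ℝ := if 0 ≤ x then 1 else -1

/-- `sign_-(x) = 1` if `x > 0`, `-1` if `x ≤ 0`. -/
def signM (x : ℝ) : ℝ := if 0 < x then 1 else -1

/-- Submodularity with respect to the coordinatewise lattice structure on `ℝ^n`. -/
def Submodular {n : ℕ} (P : (Fin n → ℝ) → ℝ) : Prop :=
  ∀ x y : Fin n → ℝ, P (x ⊔ y) + P (x ⊓ y) ≤ P x + P y

/-- Penalized quantile regression objective with a general penalty `P`. -/
def Gobj {n : ℕ} (τ lam : ℝ) (y : Fin n → ℝ) (P : (Fin n → ℝ) → ℝ)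
    (θ : Fin n → ℝ) : ℝ :=
  (∑ j : Fin n, qloss τ (y j - θ j)) + lam * P θ

end QTVD


namespace QTVD

variable {n : ℕ}

lemma length_sorted (y : Fin n → ℝ) (I : Finset (Fin n)) :
    ((I.val.map y).sort (· ≤ ·)).length = I.card := by
  rw [Multiset.length_sort, Multiset.card_map]; rfl

lemma orderStat_eq_bot (y : Fin n → ℝ) (I : Finset (Fin n)) {k : ℤ} (hk : k ≤ 0) :
    orderStat y I k = ⊥ := by
  simp [orderStat, hk]

lemma orderStat_eq_top (y : Fin n → ℝ) (I : Finset (Fin n)) {k : ℤ} (hk : (I.card : ℤ) < k) :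
    orderStat y I k = ⊤ := by
  have : ¬ k ≤ 0 := by omega
  simp [orderStat, hk, this]

lemma orderStat_mono (y : Fin n → ℝ) (I : Finset (Fin n)) {k k' : ℤ} (h : k ≤ k') :
    orderStat y I k ≤ orderStat y I k' := by
  by_cases hb : k ≤ 0
  · rw [orderStat_eq_bot y I hb]; exact bot_le
  by_cases ht : (I.card : ℤ) < k'
  · rw [orderStat_eq_top y I ht]; exact le_top
  unfold orderStat
  have hb' : ¬ k' ≤ 0 := by omega
  have ht' : ¬ (I.card : ℤ) < k := by omega
  rw [if_neg hb, if_neg hb', if_neg ht, if_neg ht']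
  have hl := length_sorted y I
  have hk1 : k.toNat - 1 < ((I.val.map y).sort (· ≤ ·)).length := by omega
  have hk2 : k'.toNat - 1 < ((I.val.map y).sort (· ≤ ·)).length := by omega
  rw [List.getD_eq_getElem _ _ hk1, List.getD_eq_getElem _ _ hk2]
  have := (Multiset.pairwise_sort (r := (· ≤ ·)) (s := I.val.map y)).rel_get_of_le
    (a := ⟨k.toNat - 1, hk1⟩) (b := ⟨k'.toNat - 1, hk2⟩) (by simp [Fin.le_def]; omega)
  exact_mod_cast this

lemma orderStat_mem (y : Fin n → ℝ) (I : Finset (Fin n)) {k : ℤ}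
    (h1 : 1 ≤ k) (h2 : k ≤ I.card) : ∃ j ∈ I, orderStat y I k = (y j : EReal) := by
  have hb : ¬ k ≤ 0 := by omega
  have ht : ¬ ((I.card : ℤ) < k) := by omega
  have hl := length_sorted y I
  have hk1 : k.toNat - 1 < ((I.val.map y).sort (· ≤ ·)).length := by omega
  have hmem : ((I.val.map y).sort (· ≤ ·)).getD (k.toNat - 1) 0 ∈ (I.val.map y) := by
    rw [List.getD_eq_getElem _ _ hk1, ← Multiset.mem_sort (· ≤ ·)]
    exact List.getElem_mem hk1
  obtain ⟨j, hj, hjy⟩ := Multiset.mem_map.mp hmem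
  exact ⟨j, hj, by simp [orderStat, hb, ht, hjy]⟩

lemma le_orderStat (y : Fin n → ℝ) (I : Finset (Fin n)) {k : ℤ} (h1 : 1 ≤ k)
    (hne : (Finset.univ : Finset (Fin n)).Nonempty) :
    ((Finset.univ.inf' hne y : ℝ) : EReal) ≤ orderStat y I k := by
  by_cases ht : (I.card : ℤ) < k
  · rw [orderStat_eq_top y I ht]; exact le_top
  obtain ⟨j, _, hj⟩ := orderStat_mem y I h1 (by omega)
  rw [hj]
  exact_mod_cast EReal.coe_le_coe_iff.mpr (Finset.inf'_le y (Finset.mem_univ j))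

lemma orderStat_le (y : Fin n → ℝ) (I : Finset (Fin n)) {k : ℤ} (h2 : k ≤ I.card)
    (hne : (Finset.univ : Finset (Fin n)).Nonempty) :
    orderStat y I k ≤ ((Finset.univ.sup' hne y : ℝ) : EReal) := by
  by_cases hb : k ≤ 0
  · rw [orderStat_eq_bot y I hb]; exact bot_le
  obtain ⟨j, _, hj⟩ := orderStat_mem y I (by omega) h2
  rw [hj]
  exact_mod_cast EReal.coe_le_coe_iff.mpr (Finset.le_sup' y (Finset.mem_univ j))

lemma orderStat_one_le (y : Fin n → ℝ) (I : Finset (Fin n)) {j : Fin n} (hj : j ∈ I) :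
    orderStat y I 1 ≤ ((y j : ℝ) : EReal) := by
  have hcard : 1 ≤ I.card := Finset.card_pos.mpr ⟨j, hj⟩
  have hb : ¬ (1 : ℤ) ≤ 0 := by omega
  have ht : ¬ ((I.card : ℤ) < 1) := by exact_mod_cast not_lt.mpr (by exact_mod_cast hcard)
  have hl := length_sorted y I
  have hmem : y j ∈ (I.val.map y).sort (· ≤ ·) := by
    rw [Multiset.mem_sort]
    exact Multiset.mem_map.mpr ⟨j, hj, rfl⟩
  obtain ⟨m, hm, hget⟩ := List.getElem_of_mem hmem
  have h0 : 0 < ((I.val.map y).sort (· ≤ ·)).length := by omega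
  unfold orderStat
  rw [if_neg hb, if_neg ht]
  simp only [Int.toNat_one]
  rw [List.getD_eq_getElem _ _ (by omega : 1 - 1 < ((I.val.map y).sort (· ≤ ·)).length)]
  have := (Multiset.pairwise_sort (r := (· ≤ ·)) (s := I.val.map y)).rel_get_of_le
    (a := ⟨1 - 1, by omega⟩) (b := ⟨m, hm⟩) (by simp [Fin.le_def])
  rw [List.get_eq_getElem, List.get_eq_getElem, hget] at this
  exact_mod_cast this

lemma le_orderStat_card (y : Fin n → ℝ) (I : Finset (Fin n)) {j : Fin n} (hj : j ∈ I) :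
    ((y j : ℝ) : EReal) ≤ orderStat y I (I.card : ℤ) := by
  have hcard : 1 ≤ I.card := Finset.card_pos.mpr ⟨j, hj⟩
  have hb : ¬ ((I.card : ℤ)) ≤ 0 := by exact_mod_cast not_le.mpr (by exact_mod_cast hcard)
  have ht : ¬ ((I.card : ℤ) < (I.card : ℤ)) := lt_irrefl _
  have hl := length_sorted y I
  have hmem : y j ∈ (I.val.map y).sort (· ≤ ·) := by
    rw [Multiset.mem_sort]
    exact Multiset.mem_map.mpr ⟨j, hj, rfl⟩
  obtain ⟨m, hm, hget⟩ := List.getElem_of_mem hmem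
  unfold orderStat
  rw [if_neg hb, if_neg ht]
  have htn : (I.card : ℤ).toNat = I.card := rfl
  rw [htn, List.getD_eq_getElem _ _ (by omega : I.card - 1 < ((I.val.map y).sort (· ≤ ·)).length)]
  have := (Multiset.pairwise_sort (r := (· ≤ ·)) (s := I.val.map y)).rel_get_of_le
    (a := ⟨m, hm⟩) (b := ⟨I.card - 1, by omega⟩) (by simp [Fin.le_def]; omega)
  rw [List.get_eq_getElem, List.get_eq_getElem, hget] at this
  exact_mod_cast this

lemma orderStat_univ_one (y : Fin n → ℝ) (hne : (Finset.univ : Finset (Fin n)).Nonempty) :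
    orderStat y Finset.univ 1 = ((Finset.univ.inf' hne y : ℝ) : EReal) := by
  refine le_antisymm ?_ (le_orderStat y _ le_rfl hne)
  obtain ⟨j, _, hj⟩ := Finset.exists_mem_eq_inf' hne y
  rw [hj]
  exact orderStat_one_le y Finset.univ (Finset.mem_univ j)

lemma orderStat_univ_card (y : Fin n → ℝ) (hne : (Finset.univ : Finset (Fin n)).Nonempty) :
    orderStat y Finset.univ ((Finset.univ : Finset (Fin n)).card) =
      ((Finset.univ.sup' hne y : ℝ) : EReal) := by
  refine le_antisymm (orderStat_le y _ le_rfl hne) ?_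
  obtain ⟨j, _, hj⟩ := Finset.exists_mem_eq_sup' hne y
  rw [hj]
  exact le_orderStat_card y Finset.univ (Finset.mem_univ j)

lemma Cconst_self {a b : ℕ} : Cconst n a b a b ≤ 0 := by
  unfold Cconst
  split_ifs <;> (try norm_num) <;> omega

lemma Cconst_full_nonneg {c d : ℕ} (h : 0 < n) : 0 ≤ Cconst n c d 0 (n - 1) := by
  unfold Cconst
  split_ifs <;> (try norm_num) <;> omega

lemma Cconst_full_eq_zero {c d : ℕ} (h : 0 < n) (hc : c ≤ d) (hd : d ≤ n - 1)
    (hC : ¬ (c = 0 ∧ d = n - 1)) : 0 < Cconst n c d 0 (n - 1) := by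
  unfold Cconst
  split_ifs <;> (try norm_num) <;> omega

lemma Cconst_eq {a c d b : ℕ} (hac : a ≤ c) (hcd : c ≤ d) (hdb : d ≤ b) (hb : b < n) :
    Cconst n c d a b =
      (if a < c then 1/2 else if a = 0 then 0 else -(1/2))
      + (if d < b then 1/2 else if b = n - 1 then 0 else -(1/2)) := by
  unfold Cconst
  split_ifs <;> (try norm_num) <;> omega

lemma Cconst_inter_add {a1 b1 a2 b2 : ℕ} (h21 : max a1 a2 ≤ b1) (h22 : max a1 a2 ≤ b2)
    (hb1 : b1 < n) (hb2 : b2 < n) :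
    Cconst n (max a1 a2) (min b1 b2) a1 b1 + Cconst n (max a1 a2) (min b1 b2) a2 b2 ≤ 0 := by
  rw [Cconst_eq (le_max_left _ _) (le_min h21 h22) (min_le_left _ _) hb1,
      Cconst_eq (le_max_right _ _) (le_min h21 h22) (min_le_right _ _) hb2]
  rcases max_choice a1 a2 with h3 | h3 <;> rcases min_choice b1 b2 with h6 | h6 <;>
    rw [h3, h6] <;>
    have h1 : a1 ≤ max a1 a2 := le_max_left _ _ <;>
    have h2 : a2 ≤ max a1 a2 := le_max_right _ _ <;>
    have h4 : min b1 b2 ≤ b1 := min_le_left _ _ <;>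
    have h5 : min b1 b2 ≤ b2 := min_le_right _ _ <;>
    rw [h3] at h1 h2 <;> rw [h6] at h4 h5 <;>
    split_ifs <;> (try norm_num) <;> omega

lemma Cconst_full_self (h : 0 < n) : Cconst n 0 (n-1) 0 (n-1) = 0 := by
  unfold Cconst
  split_ifs <;> (try norm_num) <;> omega

lemma fin_coe_max (a b : Fin n) : ((max a b : Fin n) : ℕ) = max (a : ℕ) (b : ℕ) := by
  rcases le_total a b with h | h
  · rw [max_eq_right h, max_eq_right (Fin.le_def.mp h)]
  · rw [max_eq_left h, max_eq_left (Fin.le_def.mp h)]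

lemma fin_coe_min (a b : Fin n) : ((min a b : Fin n) : ℕ) = min (a : ℕ) (b : ℕ) := by
  rcases le_total a b with h | h
  · rw [min_eq_left h, min_eq_left (Fin.le_def.mp h)]
  · rw [min_eq_right h, min_eq_right (Fin.le_def.mp h)]

end QTVD

/-- Finiteness / degeneracy of the envelope bounds.
For any location `i` and `λ ≥ 0`: if `τ ∈ (0,1)` then `-∞ < L^τ_i ≤ U^τ_i < ∞`;
if `τ = 0` and `λ > 0` then `L^0_i = -∞` and `U^0_i = min_k y_k`; and if `τ = 1`
and `λ > 0` then `L^1_i = max_k y_k` and `U^1_i = +∞`. -/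
theorem envelope_finiteness_and_degenerate_levels
    {n : ℕ} (lam : ℝ) (hlam : 0 ≤ lam) (y : Fin n → ℝ) (i : Fin n) :
    (∀ τ : ℝ, 0 < τ → τ < 1 →
      ⊥ < QTVD.Lenv τ lam y i ∧
      QTVD.Lenv τ lam y i ≤ QTVD.Uenv τ lam y i ∧
      QTVD.Uenv τ lam y i < ⊤) ∧
    (0 < lam →
      QTVD.Lenv 0 lam y i = ⊥ ∧
      QTVD.Uenv 0 lam y i = ((Finset.univ.inf' ⟨i, Finset.mem_univ i⟩ y : ℝ) : EReal)) ∧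
    (0 < lam →
      QTVD.Lenv 1 lam y i = ((Finset.univ.sup' ⟨i, Finset.mem_univ i⟩ y : ℝ) : EReal) ∧
      QTVD.Uenv 1 lam y i = ⊤) := by
  have hn : 0 < n := i.pos
  have hne : (Finset.univ : Finset (Fin n)).Nonempty := ⟨i, Finset.mem_univ i⟩
  set a0 : Fin n := ⟨0, hn⟩ with ha0def
  set bl : Fin n := ⟨n - 1, by omega⟩ with hbldef
  have ha0v : (a0 : ℕ) = 0 := rfl
  have hblv : (bl : ℕ) = n - 1 := rfl
  have ha0i : a0 ≤ i := by simp [Fin.le_def, ha0v]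
  have hibl : i ≤ bl := by
    rw [Fin.le_def, hblv]; have := i.isLt; omega
  have hIccU : Finset.Icc a0 bl = Finset.univ := by
    ext j
    simp only [Finset.mem_Icc, Finset.mem_univ, iff_true, Fin.le_def, ha0v, hblv]
    exact ⟨Nat.zero_le _, by have := j.isLt; omega⟩
  have hcard : ∀ c d : Fin n, (c : ℕ) ≤ (d : ℕ) →
      ((Finset.Icc c d).card : ℤ) = ((d : ℕ) : ℤ) - ((c : ℕ) : ℤ) + 1 := by
    intro c d h
    rw [Fin.card_Icc]
    omega
  have hunivcard : (Finset.univ : Finset (Fin n)).card = n := by simp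
  refine ⟨fun τ hτ0 hτ1 => ⟨?_, ?_, ?_⟩, fun hl => ⟨?_, ?_⟩, fun hl => ⟨?_, ?_⟩⟩
  -- 1a : ⊥ < Lenv
  · refine lt_of_lt_of_le (EReal.bot_lt_coe (Finset.univ.inf' hne y)) ?_
    unfold QTVD.Lenv
    refine le_iSup_of_le a0 (le_iSup_of_le bl (le_iSup_of_le ha0i (le_iSup_of_le hibl
      (le_iInf fun c => le_iInf fun d => le_iInf fun h1 => le_iInf fun h2 =>
        le_iInf fun h3 => le_iInf fun h4 => ?_))))
    refine QTVD.le_orderStat y _ ?_ hne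
    have hC : 0 ≤ QTVD.Cconst n (c : ℕ) (d : ℕ) (a0 : ℕ) (bl : ℕ) := by
      rw [ha0v, hblv]; exact QTVD.Cconst_full_nonneg hn
    have hcd : ((c : ℕ) : ℝ) ≤ ((d : ℕ) : ℝ) := by
      exact_mod_cast le_trans (Fin.le_def.mp h2) (Fin.le_def.mp h3)
    have hpos : 0 < QTVD.lIJ τ lam n (c : ℕ) (d : ℕ) (a0 : ℕ) (bl : ℕ) := by
      unfold QTVD.lIJ
      nlinarith [mul_nonneg (mul_nonneg (by norm_num : (0:ℝ) ≤ 2) hlam) hC]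
    exact Int.ceil_pos.mpr hpos
  -- 1b : Lenv ≤ Uenv
  · unfold QTVD.Lenv QTVD.Uenv
    refine iSup_le fun a1 => iSup_le fun b1 => iSup_le fun ha1 => iSup_le fun hb1 =>
      le_iInf fun a2 => le_iInf fun b2 => le_iInf fun ha2 => le_iInf fun hb2 => ?_
    have hsi : max a1 a2 ≤ i := max_le ha1 ha2
    have hit : i ≤ min b1 b2 := le_min hb1 hb2
    refine le_trans (iInf_le_of_le (max a1 a2) (iInf_le_of_le (min b1 b2)
      (iInf_le_of_le (le_max_left _ _) (iInf_le_of_le hsi (iInf_le_of_le hit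
        (iInf_le _ (min_le_left _ _))))))) ?_
    refine le_trans ?_ (le_iSup_of_le (max a1 a2) (le_iSup_of_le (min b1 b2)
      (le_iSup_of_le (le_max_right _ _) (le_iSup_of_le hsi (le_iSup_of_le hit
        (le_iSup _ (min_le_right _ _)))))))
    refine QTVD.orderStat_mono y _ ?_
    have hCsum : QTVD.Cconst n (max (a1:ℕ) (a2:ℕ)) (min (b1:ℕ) (b2:ℕ)) (a1:ℕ) (b1:ℕ)
        + QTVD.Cconst n (max (a1:ℕ) (a2:ℕ)) (min (b1:ℕ) (b2:ℕ)) (a2:ℕ) (b2:ℕ) ≤ 0 := by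
      refine QTVD.Cconst_inter_add ?_ ?_ b1.isLt b2.isLt
      · exact le_trans (by rw [← QTVD.fin_coe_max]; exact Fin.le_def.mp hsi)
          (Fin.le_def.mp hb1) |>.trans le_rfl
      · exact le_trans (by rw [← QTVD.fin_coe_max]; exact Fin.le_def.mp hsi)
          (Fin.le_def.mp hb2) |>.trans le_rfl
    have hval : QTVD.lIJ τ lam n ((max a1 a2 : Fin n) : ℕ) ((min b1 b2 : Fin n) : ℕ) (a1:ℕ) (b1:ℕ)
        ≤ QTVD.uIJ τ lam n ((max a1 a2 : Fin n) : ℕ) ((min b1 b2 : Fin n) : ℕ) (a2:ℕ) (b2:ℕ) := by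
      rw [QTVD.fin_coe_max, QTVD.fin_coe_min]
      unfold QTVD.lIJ QTVD.uIJ
      nlinarith [mul_nonneg (mul_nonneg (by norm_num : (0:ℝ) ≤ 2) hlam) (neg_nonneg.mpr hCsum)]
    exact le_trans (Int.ceil_le_ceil hval) (Int.ceil_le_floor_add_one _)
  -- 1c : Uenv < ⊤
  · refine lt_of_le_of_lt ?_ (EReal.coe_lt_top (Finset.univ.sup' hne y))
    unfold QTVD.Uenv
    refine le_trans (iInf_le_of_le a0 (iInf_le_of_le bl (iInf_le_of_le ha0i
      (iInf_le_of_le hibl le_rfl)))) ?_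
    refine iSup_le fun c => iSup_le fun d => iSup_le fun h1 => iSup_le fun h2 =>
      iSup_le fun h3 => iSup_le fun h4 => ?_
    refine QTVD.orderStat_le y _ ?_ hne
    have hcdn : (c : ℕ) ≤ (d : ℕ) := le_trans (Fin.le_def.mp h2) (Fin.le_def.mp h3)
    rw [hcard c d hcdn]
    have hC : 0 ≤ QTVD.Cconst n (c : ℕ) (d : ℕ) (a0 : ℕ) (bl : ℕ) := by
      rw [ha0v, hblv]; exact QTVD.Cconst_full_nonneg hn
    have hu : QTVD.uIJ τ lam n (c : ℕ) (d : ℕ) (a0 : ℕ) (bl : ℕ)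
        < ((((d : ℕ) : ℤ) - ((c : ℕ) : ℤ) + 1 : ℤ) : ℝ) := by
      unfold QTVD.uIJ
      push_cast
      have hcd : ((c : ℕ) : ℝ) ≤ ((d : ℕ) : ℝ) := by exact_mod_cast hcdn
      nlinarith [mul_nonneg (mul_nonneg (by norm_num : (0:ℝ) ≤ 2) hlam) hC]
    have := Int.floor_lt.mpr hu
    omega
  -- 2a : Lenv 0 = ⊥
  · rw [eq_bot_iff]
    unfold QTVD.Lenv
    refine iSup_le fun a => iSup_le fun b => iSup_le fun ha => iSup_le fun hb => ?_
    refine le_trans (iInf_le_of_le a (iInf_le_of_le b (iInf_le_of_le le_rfl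
      (iInf_le_of_le ha (iInf_le_of_le hb (iInf_le _ le_rfl)))))) ?_
    have hk : ⌈QTVD.lIJ 0 lam n (a : ℕ) (b : ℕ) (a : ℕ) (b : ℕ)⌉ ≤ 0 := by
      refine Int.ceil_le.mpr ?_
      unfold QTVD.lIJ
      push_cast
      nlinarith [mul_nonpos_of_nonneg_of_nonpos
        (mul_nonneg (by norm_num : (0:ℝ) ≤ 2) hlam) (QTVD.Cconst_self (n := n) (a := (a:ℕ)) (b := (b:ℕ)))]
    rw [QTVD.orderStat_eq_bot y _ hk]
  -- 2b : Uenv 0 = min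
  · refine le_antisymm ?_ ?_
    · unfold QTVD.Uenv
      refine le_trans (iInf_le_of_le a0 (iInf_le_of_le bl (iInf_le_of_le ha0i
        (iInf_le_of_le hibl le_rfl)))) ?_
      refine iSup_le fun c => iSup_le fun d => iSup_le fun h1 => iSup_le fun h2 =>
        iSup_le fun h3 => iSup_le fun h4 => ?_
      have hcdn : (c : ℕ) ≤ (d : ℕ) := le_trans (Fin.le_def.mp h2) (Fin.le_def.mp h3)
      by_cases hful : (c : ℕ) = 0 ∧ (d : ℕ) = n - 1
      · have hc : c = a0 := Fin.ext hful.1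
        have hd : d = bl := Fin.ext hful.2
        subst hc hd
        rw [hIccU]
        have hu : QTVD.uIJ 0 lam n (a0 : ℕ) (bl : ℕ) (a0 : ℕ) (bl : ℕ) = 0 := by
          rw [ha0v, hblv]
          unfold QTVD.uIJ
          rw [QTVD.Cconst_full_self hn]
          ring
        rw [hu]
        norm_num
        rw [QTVD.orderStat_univ_one y hne]
      · have hCpos : 0 < QTVD.Cconst n (c : ℕ) (d : ℕ) (a0 : ℕ) (bl : ℕ) := by
          rw [ha0v, hblv]
          exact QTVD.Cconst_full_eq_zero hn hcdn (by have := d.isLt; omega) hful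
        have hu : QTVD.uIJ 0 lam n (c : ℕ) (d : ℕ) (a0 : ℕ) (bl : ℕ) < 0 := by
          unfold QTVD.uIJ
          push_cast
          nlinarith [mul_pos (mul_pos (by norm_num : (0:ℝ) < 2) hl) hCpos]
        have hfl : ⌊QTVD.uIJ 0 lam n (c : ℕ) (d : ℕ) (a0 : ℕ) (bl : ℕ)⌋ < 0 :=
          Int.floor_lt.mpr (by exact_mod_cast hu)
        rw [QTVD.orderStat_eq_bot y _ (by omega)]
        exact bot_le
    · unfold QTVD.Uenv
      refine le_iInf fun a => le_iInf fun b => le_iInf fun ha => le_iInf fun hb => ?_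
      refine le_trans ?_ (le_iSup_of_le a (le_iSup_of_le b (le_iSup_of_le le_rfl
        (le_iSup_of_le ha (le_iSup_of_le hb (le_iSup _ le_rfl))))))
      refine QTVD.le_orderStat y _ ?_ hne
      have hC := QTVD.Cconst_self (n := n) (a := (a:ℕ)) (b := (b:ℕ))
      have hu : 0 ≤ QTVD.uIJ 0 lam n (a : ℕ) (b : ℕ) (a : ℕ) (b : ℕ) := by
        unfold QTVD.uIJ
        nlinarith [mul_nonpos_of_nonneg_of_nonpos
          (mul_nonneg (by norm_num : (0:ℝ) ≤ 2) hlam) hC]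
      have := Int.floor_nonneg.mpr hu
      omega
  -- 3a : Lenv 1 = max
  · refine le_antisymm ?_ ?_
    · unfold QTVD.Lenv
      refine iSup_le fun a => iSup_le fun b => iSup_le fun ha => iSup_le fun hb => ?_
      refine le_trans (iInf_le_of_le a (iInf_le_of_le b (iInf_le_of_le le_rfl
        (iInf_le_of_le ha (iInf_le_of_le hb (iInf_le _ le_rfl)))))) ?_
      refine QTVD.orderStat_le y _ ?_ hne
      have habn : (a : ℕ) ≤ (b : ℕ) := le_trans (Fin.le_def.mp ha) (Fin.le_def.mp hb)
      rw [hcard a b habn]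
      refine Int.ceil_le.mpr ?_
      unfold QTVD.lIJ
      push_cast
      nlinarith [mul_nonpos_of_nonneg_of_nonpos
        (mul_nonneg (by norm_num : (0:ℝ) ≤ 2) hlam) (QTVD.Cconst_self (n := n) (a := (a:ℕ)) (b := (b:ℕ)))]
    · unfold QTVD.Lenv
      refine le_trans ?_ (le_iSup_of_le a0 (le_iSup_of_le bl (le_iSup_of_le ha0i
        (le_iSup_of_le hibl le_rfl))))
      refine le_iInf fun c => le_iInf fun d => le_iInf fun h1 => le_iInf fun h2 =>
        le_iInf fun h3 => le_iInf fun h4 => ?_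
      have hcdn : (c : ℕ) ≤ (d : ℕ) := le_trans (Fin.le_def.mp h2) (Fin.le_def.mp h3)
      by_cases hful : (c : ℕ) = 0 ∧ (d : ℕ) = n - 1
      · have hc : c = a0 := Fin.ext hful.1
        have hd : d = bl := Fin.ext hful.2
        subst hc hd
        rw [hIccU]
        have hu : QTVD.lIJ 1 lam n (a0 : ℕ) (bl : ℕ) (a0 : ℕ) (bl : ℕ) = ((n : ℤ) : ℝ) := by
          rw [ha0v, hblv]
          unfold QTVD.lIJ
          rw [QTVD.Cconst_full_self hn]
          push_cast [Nat.cast_sub hn]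
          ring
        rw [hu, Int.ceil_intCast]
        have hoc := QTVD.orderStat_univ_card y hne
        rw [hunivcard] at hoc
        exact hoc.ge
      · have hCpos : 0 < QTVD.Cconst n (c : ℕ) (d : ℕ) (a0 : ℕ) (bl : ℕ) := by
          rw [ha0v, hblv]
          exact QTVD.Cconst_full_eq_zero hn hcdn (by have := d.isLt; omega) hful
        have hk : ((Finset.Icc c d).card : ℤ) < ⌈QTVD.lIJ 1 lam n (c : ℕ) (d : ℕ) (a0 : ℕ) (bl : ℕ)⌉ := by
          refine Int.lt_ceil.mpr ?_
          rw [hcard c d hcdn]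
          unfold QTVD.lIJ
          push_cast
          nlinarith [mul_pos (mul_pos (by norm_num : (0:ℝ) < 2) hl) hCpos]
        rw [QTVD.orderStat_eq_top y _ hk]
        exact le_top
  -- 3b : Uenv 1 = ⊤
  · rw [eq_top_iff]
    unfold QTVD.Uenv
    refine le_iInf fun a => le_iInf fun b => le_iInf fun ha => le_iInf fun hb => ?_
    refine le_trans ?_ (le_iSup_of_le a (le_iSup_of_le b (le_iSup_of_le le_rfl
      (le_iSup_of_le ha (le_iSup_of_le hb (le_iSup _ le_rfl))))))
    have habn : (a : ℕ) ≤ (b : ℕ) := le_trans (Fin.le_def.mp ha) (Fin.le_def.mp hb)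
    have hk : ((Finset.Icc a b).card : ℤ) < ⌊QTVD.uIJ 1 lam n (a : ℕ) (b : ℕ) (a : ℕ) (b : ℕ)⌋ + 1 := by
      have : ((Finset.Icc a b).card : ℤ) ≤ ⌊QTVD.uIJ 1 lam n (a : ℕ) (b : ℕ) (a : ℕ) (b : ℕ)⌋ := by
        refine Int.le_floor.mpr ?_
        rw [hcard a b habn]
        unfold QTVD.uIJ
        push_cast
        nlinarith [mul_nonpos_of_nonneg_of_nonpos
          (mul_nonneg (by norm_num : (0:ℝ) ≤ 2) hlam) (QTVD.Cconst_self (n := n) (a := (a:ℕ)) (b := (b:ℕ)))]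
      omega
    rw [QTVD.orderStat_eq_top y _ hk]
end
end

section
/- (Deterministic local bias–variance decomposition.) Fix τ∈(0,1), λ≥0, θ*∈ℝ^n and ε∈ℝ^n, and let y=θ*+ε. Then for any quantile TVD solution θ̂∈S^τ and any location i∈[1:n]: θ̂_i − θ*_i ≤ min over discrete intervals J containing i of [ max_{k∈J}(θ*_k−θ*_i) + max over discrete intervals I⊆J containing i of ε_{I,(⌊u^τ_{I,J}⌋+1)} ], and θ̂_i − θ*_i ≥ max over discrete intervals J containing i of [ min_{k∈J}(θ*_k−θ*_i) + min over discrete intervals I⊆J containing i of ε_{I,(⌈l^τ_{I,J}⌉)} ]. -/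
open scoped BigOperators

noncomputable section

namespace QTVD

lemma signP_le_one (x : ℝ) : signP x ≤ 1 := by unfold signP; split_ifs <;> norm_num

lemma signP_of_neg {x : ℝ} (h : x < 0) : signP x = -1 := by unfold signP; rw [if_neg (by linarith)]

lemma qloss_of_nonneg {τ x : ℝ} (h : 0 ≤ x) : qloss τ x = τ * x := by
  unfold qloss; exact max_eq_left (by nlinarith)

lemma qloss_of_nonpos {τ x : ℝ} (h : x ≤ 0) : qloss τ x = (τ - 1) * x := by
  unfold qloss; exact max_eq_right (by nlinarith)

lemma abs_sub_t_le (A t : ℝ) (ht : 0 < t) (hA : 0 < A → t ≤ A) : |A - t| ≤ |A| + t * signP (-A) := by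
  unfold signP
  split_ifs with h
  · rw [abs_of_nonpos (by linarith), abs_of_nonpos (by linarith)]; linarith
  · push_neg at h
    have h2 := hA (by linarith)
    rw [abs_of_nonneg (by linarith), abs_of_nonneg (by linarith)]; linarith

lemma abs_add_t_le (B t : ℝ) (ht : 0 < t) (hB : B < 0 → t ≤ -B) : |B + t| ≤ |B| + t * signP B := by
  unfold signP
  split_ifs with h
  · rw [abs_of_nonneg h, abs_of_nonneg (by linarith)]; linarith
  · push_neg at h
    have h2 := hB h
    rw [abs_of_nonpos (by linarith), abs_of_nonpos (by linarith)]; linarith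

lemma countA {n : ℕ} {τ lam : ℝ} (hlam : 0 ≤ lam)
    (y θ : Fin n → ℝ) (hsol : θ ∈ sol τ lam y) (c d : Fin n) (hcd : c ≤ d)
    (σL σR : ℝ)
    (hσL : σL = if hc : 0 < (c:ℕ) then
        signP (θ ⟨(c:ℕ)-1, lt_of_le_of_lt (Nat.sub_le _ _) c.isLt⟩ - θ c) else 0)
    (hσR : σR = if hd : (d:ℕ)+1 < n then signP (θ ⟨(d:ℕ)+1, hd⟩ - θ d) else 0) :
    (((Finset.Icc c d).filter (fun j => y j < θ j)).card : ℝ) ≤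
      τ * ((Finset.Icc c d).card : ℝ) + lam * (σL + σR) := by
  classical
  set I := Finset.Icc c d with hI
  have hcI : c ∈ I := Finset.mem_Icc.mpr ⟨le_refl c, hcd⟩
  set K := (I.filter (fun j => y j < θ j)).card with hK
  -- the step size t
  set tI := I.inf' ⟨c, hcI⟩ (fun j => if y j < θ j then θ j - y j else 1) with htI
  set tL := if hc : 0 < (c:ℕ) then
      (if θ ⟨(c:ℕ)-1, lt_of_le_of_lt (Nat.sub_le _ _) c.isLt⟩ < θ c then
        θ c - θ ⟨(c:ℕ)-1, lt_of_le_of_lt (Nat.sub_le _ _) c.isLt⟩ else 1) else 1 with htL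
  set tR := if hd : (d:ℕ)+1 < n then
      (if θ ⟨(d:ℕ)+1, hd⟩ < θ d then θ d - θ ⟨(d:ℕ)+1, hd⟩ else 1) else 1 with htR
  set t := min (min tL tR) tI with ht
  have htI0 : 0 < tI := by
    rw [htI]; refine (Finset.lt_inf'_iff _).mpr ?_
    intro j _; split_ifs with h
    · linarith
    · norm_num
  have htL0 : 0 < tL := by
    rw [htL]; split_ifs with h1 h2 <;> first | linarith | norm_num
  have htR0 : 0 < tR := by
    rw [htR]; split_ifs with h1 h2 <;> first | linarith | norm_num
  have ht0 : 0 < t := lt_min (lt_min htL0 htR0) htI0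
  have httI : t ≤ tI := min_le_right _ _
  have httL : t ≤ tL := le_trans (min_le_left _ _) (min_le_left _ _)
  have httR : t ≤ tR := le_trans (min_le_left _ _) (min_le_right _ _)
  set η := fun j => if j ∈ I then θ j - t else θ j with hη
  have key := hsol η
  rw [obj, obj] at key
  -- loss bound
  have hpt : ∀ j : Fin n, qloss τ (y j - η j) ≤ qloss τ (y j - θ j) +
      (if j ∈ I then (if θ j ≤ y j then τ*t else (τ-1)*t) else 0) := by
    intro j
    by_cases hj : j ∈ I
    · simp only [hη, if_pos hj]
      by_cases hyθ : θ j ≤ y j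
      · rw [if_pos hyθ]
        have e1 : y j - (θ j - t) = (y j - θ j) + t := by ring
        rw [e1, qloss_of_nonneg (by linarith), qloss_of_nonneg (by linarith)]
        ring_nf; linarith
      · rw [if_neg hyθ]
        push_neg at hyθ
        have hts : t ≤ θ j - y j := by
          refine le_trans httI ?_
          have := Finset.inf'_le (b := j) (fun j => if y j < θ j then θ j - y j else 1) hj
          rwa [if_pos hyθ] at this
        have e1 : y j - (θ j - t) = (y j - θ j) + t := by ring
        rw [e1, qloss_of_nonpos (by linarith), qloss_of_nonpos (by linarith)]
        ring_nf; linarith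
    · simp only [hη, if_neg hj]; linarith
  have hsum_ite : ∑ j : Fin n, (if j ∈ I then (if θ j ≤ y j then τ*t else (τ-1)*t) else 0)
      = t * (τ * (I.card : ℝ) - (K : ℝ)) := by
    rw [Finset.sum_ite_mem, Finset.univ_inter, Finset.sum_ite, Finset.sum_const, Finset.sum_const]
    have hfneg : I.filter (fun j => ¬ θ j ≤ y j) = I.filter (fun j => y j < θ j) :=
      Finset.filter_congr (fun j _ => by rw [not_le])
    have hsplit := Finset.card_filter_add_card_filter_not
      (s := I) (p := fun j => θ j ≤ y j)
    rw [hfneg] at hsplit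
    rw [hfneg, ← hK]
    have : ((I.filter (fun j => θ j ≤ y j)).card : ℝ) = (I.card : ℝ) - (K : ℝ) := by
      rw [← hsplit]; push_cast; ring
    rw [nsmul_eq_mul, nsmul_eq_mul, this]
    ring
  have hloss : ∑ j : Fin n, qloss τ (y j - η j) ≤
      (∑ j : Fin n, qloss τ (y j - θ j)) + t * (τ * (I.card : ℝ) - (K : ℝ)) := by
    calc ∑ j : Fin n, qloss τ (y j - η j)
        ≤ ∑ j : Fin n, (qloss τ (y j - θ j) +
            (if j ∈ I then (if θ j ≤ y j then τ*t else (τ-1)*t) else 0)) :=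
          Finset.sum_le_sum (fun j _ => hpt j)
      _ = _ := by rw [Finset.sum_add_distrib, hsum_ite]
  -- TV bound
  have hedge : ∀ j : Fin n,
      (if h : (j:ℕ)+1 < n then |η ⟨(j:ℕ)+1, h⟩ - η j| else 0) ≤
      (if h : (j:ℕ)+1 < n then |θ ⟨(j:ℕ)+1, h⟩ - θ j| else 0)
      + t * ((if (j:ℕ)+1 = (c:ℕ) then σL else 0)
           + (if ((j:ℕ) = (d:ℕ) ∧ (d:ℕ)+1 < n) then σR else 0)) := by
    intro j
    have hmemI : ∀ x : Fin n, x ∈ I ↔ (c:ℕ) ≤ (x:ℕ) ∧ (x:ℕ) ≤ (d:ℕ) := by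
      intro x; rw [hI, Finset.mem_Icc, Fin.le_def, Fin.le_def]
    have hcd' : (c:ℕ) ≤ (d:ℕ) := Fin.le_def.mp hcd
    by_cases h : (j:ℕ)+1 < n
    swap
    · have h1 : ¬((j:ℕ)+1 = (c:ℕ)) := by have := c.isLt; omega
      have h2 : ¬((j:ℕ) = (d:ℕ) ∧ (d:ℕ)+1 < n) := by intro hh; omega
      rw [dif_neg h, dif_neg h, if_neg h1, if_neg h2]; linarith
    rw [dif_pos h, dif_pos h]
    set j' : Fin n := ⟨(j:ℕ)+1, h⟩ with hj'def
    by_cases hj : j ∈ I <;> by_cases hj2 : j' ∈ I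
    · -- both in I
      have hjn : (c:ℕ) ≤ (j:ℕ) ∧ (j:ℕ) ≤ (d:ℕ) := (hmemI j).mp hj
      have hj2n : (c:ℕ) ≤ (j:ℕ)+1 ∧ (j:ℕ)+1 ≤ (d:ℕ) := (hmemI j').mp hj2
      have h1 : ¬((j:ℕ)+1 = (c:ℕ)) := by omega
      have h2 : ¬((j:ℕ) = (d:ℕ) ∧ (d:ℕ)+1 < n) := by intro hh; omega
      simp only [hη, if_pos hj, if_pos hj2]
      rw [if_neg h1, if_neg h2]
      have e1 : θ j' - t - (θ j - t) = θ j' - θ j := by ring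
      rw [e1]; linarith
    · -- j ∈ I, j' ∉ I : j = d
      have hjn : (c:ℕ) ≤ (j:ℕ) ∧ (j:ℕ) ≤ (d:ℕ) := (hmemI j).mp hj
      have hj2n : ¬((c:ℕ) ≤ (j:ℕ)+1 ∧ (j:ℕ)+1 ≤ (d:ℕ)) :=
        fun hh => hj2 ((hmemI j').mpr hh)
      have hjd : (j:ℕ) = (d:ℕ) := by omega
      have hdn : (d:ℕ)+1 < n := by omega
      have h1 : ¬((j:ℕ)+1 = (c:ℕ)) := by omega
      have h2 : ((j:ℕ) = (d:ℕ) ∧ (d:ℕ)+1 < n) := ⟨hjd, hdn⟩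
      simp only [hη, if_pos hj, if_neg hj2]
      rw [if_neg h1, if_pos h2]
      have e1 : θ j' - (θ j - t) = (θ j' - θ j) + t := by ring
      rw [e1]
      have hde : (⟨(d:ℕ)+1, hdn⟩ : Fin n) = j' := by apply Fin.ext; simp only [hj'def]; omega
      have hdj : d = j := by apply Fin.ext; omega
      have hσReq : σR = signP (θ j' - θ j) := by rw [hσR, dif_pos hdn, hde, hdj]
      rw [hσReq]
      have := abs_add_t_le (θ j' - θ j) t ht0 (fun hneg => by
        refine le_trans httR ?_
        rw [htR, dif_pos hdn, hde, hdj, if_pos (by linarith)]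
        linarith)
      linarith
    · -- j ∉ I, j' ∈ I : j' = c
      have hjn : ¬((c:ℕ) ≤ (j:ℕ) ∧ (j:ℕ) ≤ (d:ℕ)) := fun hh => hj ((hmemI j).mpr hh)
      have hj2n : (c:ℕ) ≤ (j:ℕ)+1 ∧ (j:ℕ)+1 ≤ (d:ℕ) := (hmemI j').mp hj2
      have hjc : (j:ℕ)+1 = (c:ℕ) := by omega
      have hc0 : 0 < (c:ℕ) := by omega
      have h2 : ¬((j:ℕ) = (d:ℕ) ∧ (d:ℕ)+1 < n) := by intro hh; omega
      simp only [hη, if_neg hj, if_pos hj2]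
      rw [if_pos hjc, if_neg h2]
      have e1 : θ j' - t - θ j = (θ j' - θ j) - t := by ring
      rw [e1]
      have hce : (⟨(c:ℕ)-1, lt_of_le_of_lt (Nat.sub_le _ _) c.isLt⟩ : Fin n) = j := by
        apply Fin.ext; simp only [hj'def]; omega
      have hce2 : c = j' := by apply Fin.ext; simp only [hj'def]; omega
      have hσLeq : σL = signP (-(θ j' - θ j)) := by
        rw [hσL, dif_pos hc0, hce, hce2]
        congr 1; ring
      rw [hσLeq]
      have := abs_sub_t_le (θ j' - θ j) t ht0 (fun hpos => by
        refine le_trans httL ?_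
        rw [htL, dif_pos hc0, hce, hce2, if_pos (by linarith)])
      linarith
    · -- both out
      have hjn : ¬((c:ℕ) ≤ (j:ℕ) ∧ (j:ℕ) ≤ (d:ℕ)) := fun hh => hj ((hmemI j).mpr hh)
      have hj2n : ¬((c:ℕ) ≤ (j:ℕ)+1 ∧ (j:ℕ)+1 ≤ (d:ℕ)) :=
        fun hh => hj2 ((hmemI j').mpr hh)
      have h1 : ¬((j:ℕ)+1 = (c:ℕ)) := by omega
      have h2 : ¬((j:ℕ) = (d:ℕ) ∧ (d:ℕ)+1 < n) := by intro hh; omega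
      simp only [hη, if_neg hj, if_neg hj2]
      rw [if_neg h1, if_neg h2]
      linarith
  have hindL : ∑ j : Fin n, (if (j:ℕ)+1 = (c:ℕ) then σL else 0) = σL := by
    by_cases hc0 : 0 < (c:ℕ)
    · set jL : Fin n := ⟨(c:ℕ)-1, lt_of_le_of_lt (Nat.sub_le _ _) c.isLt⟩ with hjL
      have : ∀ j : Fin n, ((j:ℕ)+1 = (c:ℕ)) = (j = jL) := by
        intro j; apply propext
        constructor
        · intro hh; apply Fin.ext; simp only [hjL]; omega
        · intro hh; subst hh; simp only [hjL]; omega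
      simp only [this]
      rw [Finset.sum_ite_eq' Finset.univ jL (fun _ => σL), if_pos (Finset.mem_univ _)]
    · have : ∀ j : Fin n, ¬ ((j:ℕ)+1 = (c:ℕ)) := by intro j hh; omega
      simp only [this, if_false, Finset.sum_const_zero]
      rw [hσL, dif_neg hc0]
  have hindR : ∑ j : Fin n, (if ((j:ℕ) = (d:ℕ) ∧ (d:ℕ)+1 < n) then σR else 0) = σR := by
    by_cases hd0 : (d:ℕ)+1 < n
    · have : ∀ j : Fin n, ((j:ℕ) = (d:ℕ) ∧ (d:ℕ)+1 < n) = (j = d) := by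
        intro j; apply propext
        constructor
        · intro hh; exact Fin.ext hh.1
        · intro hh; subst hh; exact ⟨rfl, hd0⟩
      simp only [this]
      rw [Finset.sum_ite_eq' Finset.univ d (fun _ => σR), if_pos (Finset.mem_univ _)]
    · have : ∀ j : Fin n, ¬ ((j:ℕ) = (d:ℕ) ∧ (d:ℕ)+1 < n) := by intro j hh; omega
      simp only [this, if_false, Finset.sum_const_zero]
      rw [hσR, dif_neg hd0]
  have htv : TV η ≤ TV θ + t * (σL + σR) := by
    rw [TV, TV]
    calc ∑ j : Fin n, (if h : (j:ℕ)+1 < n then |η ⟨(j:ℕ)+1, h⟩ - η j| else 0)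
        ≤ ∑ j : Fin n, ((if h : (j:ℕ)+1 < n then |θ ⟨(j:ℕ)+1, h⟩ - θ j| else 0)
            + t * ((if (j:ℕ)+1 = (c:ℕ) then σL else 0)
                 + (if ((j:ℕ) = (d:ℕ) ∧ (d:ℕ)+1 < n) then σR else 0))) :=
          Finset.sum_le_sum (fun j _ => hedge j)
      _ = _ := by
          rw [Finset.sum_add_distrib]
          congr 1
          rw [← Finset.mul_sum, Finset.sum_add_distrib, hindL, hindR]
  -- combine
  have hfin : 0 ≤ t * ((τ * (I.card : ℝ) - (K : ℝ)) + lam * (σL + σR)) := by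
    have h1 : lam * TV η ≤ lam * (TV θ + t * (σL + σR)) :=
      mul_le_mul_of_nonneg_left htv hlam
    nlinarith [key, hloss]
  have hbr : 0 ≤ (τ * (I.card : ℝ) - (K : ℝ)) + lam * (σL + σR) := by
    by_contra hneg
    push_neg at hneg
    nlinarith
  linarith

lemma sol_neg {n : ℕ} (τ lam : ℝ) (y θ : Fin n → ℝ) (hsol : θ ∈ sol τ lam y) :
    (fun j => -θ j) ∈ sol (1-τ) lam (fun j => -y j) := by
  have eq1 : ∀ (ψ φ : Fin n → ℝ),
      obj (1-τ) lam (fun j => -ψ j) (fun j => -φ j) = obj τ lam ψ φ := by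
    intro ψ φ
    unfold obj TV qloss
    congr 1
    · apply Finset.sum_congr rfl
      intro j _
      rw [max_comm]
      congr 1 <;> ring
    · congr 1
      apply Finset.sum_congr rfl
      intro j _
      split_ifs with h
      · rw [← abs_neg]; congr 1; ring
      · rfl
  intro η
  have hηe : (fun j => -(-η j)) = η := by funext j; ring
  calc obj (1-τ) lam (fun j => -y j) (fun j => -θ j) = obj τ lam y θ := eq1 y θ
    _ ≤ obj τ lam y (fun j => -η j) := hsol _
    _ = obj (1-τ) lam (fun j => -y j) (fun j => -(-η j)) := (eq1 y (fun j => -η j)).symm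
    _ = obj (1-τ) lam (fun j => -y j) η := by rw [hηe]

lemma countB {n : ℕ} {τ lam : ℝ} (hlam : 0 ≤ lam)
    (y θ : Fin n → ℝ) (hsol : θ ∈ sol τ lam y) (c d : Fin n) (hcd : c ≤ d)
    (σL σR : ℝ)
    (hσL : σL = if hc : 0 < (c:ℕ) then
        signP (θ c - θ ⟨(c:ℕ)-1, lt_of_le_of_lt (Nat.sub_le _ _) c.isLt⟩) else 0)
    (hσR : σR = if hd : (d:ℕ)+1 < n then signP (θ d - θ ⟨(d:ℕ)+1, hd⟩) else 0) :
    (((Finset.Icc c d).filter (fun j => θ j < y j)).card : ℝ) ≤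
      (1-τ) * ((Finset.Icc c d).card : ℝ) + lam * (σL + σR) := by
  have h := countA hlam (fun j => -y j) (fun j => -θ j) (sol_neg τ lam y θ hsol) c d hcd
    σL σR
    (by rw [hσL]
        by_cases hc : 0 < (c:ℕ)
        · rw [dif_pos hc, dif_pos hc]; congr 1; ring
        · rw [dif_neg hc, dif_neg hc])
    (by rw [hσR]
        by_cases hd : (d:ℕ)+1 < n
        · rw [dif_pos hd, dif_pos hd]; congr 1; ring
        · rw [dif_neg hd, dif_neg hd])
  have hfe : (Finset.Icc c d).filter (fun j => -y j < -θ j)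
      = (Finset.Icc c d).filter (fun j => θ j < y j) := by
    apply Finset.filter_congr
    intro j _
    simp
  rw [hfe] at h
  exact h

lemma sigma_le_C (n a b c d : ℕ) (σL σR : ℝ)
    (hac : a ≤ c) (hcd : c ≤ d) (hdb : d ≤ b) (hbn : b < n)
    (hL0 : c = 0 → σL = 0) (hLneg : a < c → σL = -1) (hL1 : σL ≤ 1)
    (hR0 : d + 1 = n → σR = 0) (hRneg : d < b → σR = -1) (hR1 : σR ≤ 1) :
    σL + σR ≤ -2 * Cconst n c d a b := by
  unfold Cconst
  split_ifs <;>
  first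
  | linarith [hLneg (by omega), hRneg (by omega)]
  | linarith [hLneg (by omega), hR0 (by omega)]
  | linarith [hRneg (by omega), hL0 (by omega)]
  | linarith [hL0 (by omega), hR0 (by omega)]
  | linarith [hLneg (by omega)]
  | linarith [hRneg (by omega)]
  | linarith [hL0 (by omega)]
  | linarith [hR0 (by omega)]
  | linarith
  | (rcases (show a < c ∨ d < b by omega) with h | h
     · linarith [hLneg h]
     · linarith [hRneg h])
  | (rcases (show c = 0 ∨ a < c by omega) with hc | hc <;>
     rcases (show d + 1 = n ∨ d < b by omega) with hd | hd <;>
     first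
       | linarith [hL0 hc, hR0 hd]
       | linarith [hL0 hc, hRneg hd]
       | linarith [hLneg hc, hR0 hd]
       | linarith [hLneg hc, hRneg hd]
       | (exfalso; omega))

lemma exists_maximal_interval {n : ℕ} (θ : Fin n → ℝ) (a b i : Fin n)
    (hai : a ≤ i) (hib : i ≤ b) (m : ℝ) (hm : m ≤ θ i) :
    ∃ c d : Fin n, a ≤ c ∧ c ≤ i ∧ i ≤ d ∧ d ≤ b ∧
      (∀ j ∈ Finset.Icc c d, m ≤ θ j) ∧
      ((a : ℕ) < (c : ℕ) → θ ⟨(c:ℕ)-1, lt_of_le_of_lt (Nat.sub_le _ _) c.isLt⟩ < m) ∧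
      (∀ h : (d : ℕ) < (b : ℕ),
        θ ⟨(d:ℕ)+1, Nat.lt_of_le_of_lt (Nat.succ_le_of_lt h) b.isLt⟩ < m) := by
  classical
  set Sc : Finset (Fin n) :=
    (Finset.Icc a i).filter (fun c => ∀ j ∈ Finset.Icc c i, m ≤ θ j) with hSc
  have hiSc : i ∈ Sc := by
    rw [hSc, Finset.mem_filter]
    refine ⟨Finset.mem_Icc.mpr ⟨hai, le_refl i⟩, fun j hj => ?_⟩
    rw [Finset.mem_Icc] at hj
    have : j = i := le_antisymm hj.2 hj.1
    rw [this]; exact hm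
  set c := Sc.min' ⟨i, hiSc⟩ with hc
  have hcSc : c ∈ Sc := Finset.min'_mem _ _
  rw [hSc, Finset.mem_filter, Finset.mem_Icc] at hcSc
  obtain ⟨⟨hac, hci⟩, hcall⟩ := hcSc
  set Sd : Finset (Fin n) :=
    (Finset.Icc i b).filter (fun d => ∀ j ∈ Finset.Icc i d, m ≤ θ j) with hSd
  have hiSd : i ∈ Sd := by
    rw [hSd, Finset.mem_filter]
    refine ⟨Finset.mem_Icc.mpr ⟨le_refl i, hib⟩, fun j hj => ?_⟩
    rw [Finset.mem_Icc] at hj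
    have : j = i := le_antisymm hj.2 hj.1
    rw [this]; exact hm
  set d := Sd.max' ⟨i, hiSd⟩ with hd
  have hdSd : d ∈ Sd := Finset.max'_mem _ _
  rw [hSd, Finset.mem_filter, Finset.mem_Icc] at hdSd
  obtain ⟨⟨hid, hdb⟩, hdall⟩ := hdSd
  refine ⟨c, d, hac, hci, hid, hdb, ?_, ?_, ?_⟩
  · intro j hj
    rw [Finset.mem_Icc] at hj
    rcases le_total j i with h | h
    · exact hcall j (Finset.mem_Icc.mpr ⟨hj.1, h⟩)
    · exact hdall j (Finset.mem_Icc.mpr ⟨h, hj.2⟩)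
  · intro hlt
    set c' : Fin n := ⟨(c:ℕ)-1, lt_of_le_of_lt (Nat.sub_le _ _) c.isLt⟩ with hc'
    by_contra hcon
    push_neg at hcon
    have hc'Sc : c' ∈ Sc := by
      rw [hSc, Finset.mem_filter, Finset.mem_Icc]
      refine ⟨⟨?_, ?_⟩, fun j hj => ?_⟩
      · rw [Fin.le_def]; simp only [hc']; omega
      · rw [Fin.le_def]; simp only [hc']
        have := Fin.le_def.mp hci; omega
      · rw [Finset.mem_Icc] at hj
        rcases eq_or_lt_of_le hj.1 with h | h
        · rw [← h]; exact hcon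
        · refine hcall j (Finset.mem_Icc.mpr ⟨?_, hj.2⟩)
          rw [Fin.le_def]
          have := Fin.lt_def.mp h
          simp only [hc'] at this; omega
    have := Finset.min'_le _ _ hc'Sc
    rw [← hc] at this
    have h2 := Fin.le_def.mp this
    simp only [hc'] at h2; omega
  · intro hlt
    set d' : Fin n := ⟨(d:ℕ)+1, Nat.lt_of_le_of_lt (Nat.succ_le_of_lt hlt) b.isLt⟩ with hd'
    by_contra hcon
    push_neg at hcon
    have hd'Sd : d' ∈ Sd := by
      rw [hSd, Finset.mem_filter, Finset.mem_Icc]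
      refine ⟨⟨?_, ?_⟩, fun j hj => ?_⟩
      · rw [Fin.le_def]; simp only [hd']
        have := Fin.le_def.mp hid; omega
      · rw [Fin.le_def]; simp only [hd']; omega
      · rw [Finset.mem_Icc] at hj
        rcases eq_or_lt_of_le hj.2 with h | h
        · rw [h]; exact hcon
        · refine hdall j (Finset.mem_Icc.mpr ⟨hj.1, ?_⟩)
          rw [Fin.le_def]
          have := Fin.lt_def.mp h
          simp only [hd'] at this; omega
    have := Finset.le_max' _ _ hd'Sd
    rw [← hd] at this
    have h2 := Fin.le_def.mp this
    simp only [hd'] at h2; omega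

lemma filter_card_eq_countP {n : ℕ} (εf : Fin n → ℝ) (I : Finset (Fin n))
    (p : ℝ → Prop) [DecidablePred p] :
    (I.filter (fun j => p (εf j))).card
      = ((I.val.map εf).sort (·≤·)).countP (fun x => decide (p x)) := by
  have h1 : (I.filter (fun j => p (εf j))).card = Multiset.countP (fun j => p (εf j)) I.val :=
    (Multiset.countP_eq_card_filter _ _).symm.trans rfl
  have h2 : Multiset.countP (fun j => p (εf j)) I.val = Multiset.countP p (I.val.map εf) :=
    ((Multiset.countP_map εf I.val p).trans (Multiset.countP_eq_card_filter _ _).symm).symm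
  rw [h1, h2]
  conv_lhs => rw [← Multiset.sort_eq (I.val.map εf) (·≤·)]
  rfl

lemma sorted_countP_le (L : List ℝ) (hs : L.Pairwise (·≤·)) (k : ℕ) (hk1 : 1 ≤ k) (hk2 : k ≤ L.length)
    (r : ℝ) (hr : r = L.getD (k-1) 0) :
    k ≤ L.countP (fun x => decide (x ≤ r)) := by
  have hgd : r = L[k-1]'(by omega) := by rw [hr]; exact List.getD_eq_getElem L 0 (by omega)
  calc k = (L.take k).length := by simp; omega
  _ = (L.take k).countP (fun x => decide (x ≤ r)) := by
      refine (List.countP_eq_length.mpr ?_).symm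
      intro x hx
      obtain ⟨i, hi, hx⟩ := List.mem_iff_getElem.mp hx
      have hilt : i < k := by simpa using lt_of_lt_of_le hi (by simp)
      have hiL : i < L.length := by omega
      have : L[i] ≤ L[k-1]'(by omega) := by
        rcases eq_or_lt_of_le (by omega : i ≤ k-1) with h | h
        · subst h; exact le_rfl
        · exact hs.rel_get_of_lt (by simpa using h)
      rw [← hx, List.getElem_take]
      simp only [decide_eq_true_eq, hgd]
      exact this
  _ ≤ L.countP (fun x => decide (x ≤ r)) := by
      conv_rhs => rw [← List.take_append_drop k L]
      rw [List.countP_append]; omega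

lemma sorted_countP_ge (L : List ℝ) (hs : L.Pairwise (·≤·)) (k : ℕ) (hk1 : 1 ≤ k) (hk2 : k ≤ L.length)
    (r : ℝ) (hr : r = L.getD (k-1) 0) :
    L.length - (k-1) ≤ L.countP (fun x => decide (r ≤ x)) := by
  have hgd : r = L[k-1]'(by omega) := by rw [hr]; exact List.getD_eq_getElem L 0 (by omega)
  calc L.length - (k-1) = (L.drop (k-1)).length := by simp
  _ = (L.drop (k-1)).countP (fun x => decide (r ≤ x)) := by
      refine (List.countP_eq_length.mpr ?_).symm
      intro x hx
      obtain ⟨i, hi, hx⟩ := List.mem_iff_getElem.mp hx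
      have : L[k-1]'(by omega) ≤ L[(k-1)+i]'(by simp at hi; omega) := by
        rcases Nat.eq_zero_or_pos i with h | h
        · subst h; simp
        · exact hs.rel_get_of_lt (by simp; omega)
      rw [← hx, List.getElem_drop]
      simp only [decide_eq_true_eq, hgd]
      exact this
  _ ≤ L.countP (fun x => decide (r ≤ x)) := by
      conv_rhs => rw [← List.take_append_drop (k-1) L]
      rw [List.countP_append]; omega

lemma card_le_filter_le {n : ℕ} (εf : Fin n → ℝ) (I : Finset (Fin n)) (k : ℕ)
    (hk1 : 1 ≤ k) (hk2 : k ≤ I.card) (r : ℝ)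
    (hr : r = ((I.val.map εf).sort (·≤·)).getD (k - 1) 0) :
    k ≤ (I.filter (fun j => εf j ≤ r)).card := by
  rw [filter_card_eq_countP εf I (fun x => x ≤ r)]
  apply sorted_countP_le _ (Multiset.pairwise_sort _ _) k hk1
  · rw [Multiset.length_sort, Multiset.card_map]; exact hk2
  · exact hr

lemma card_le_filter_ge {n : ℕ} (εf : Fin n → ℝ) (I : Finset (Fin n)) (k : ℕ)
    (hk1 : 1 ≤ k) (hk2 : k ≤ I.card) (r : ℝ)
    (hr : r = ((I.val.map εf).sort (·≤·)).getD (k - 1) 0) :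
    I.card - (k-1) ≤ (I.filter (fun j => r ≤ εf j)).card := by
  rw [filter_card_eq_countP εf I (fun x => r ≤ x)]
  have hlen : ((I.val.map εf).sort (·≤·)).length = I.card := by
    rw [Multiset.length_sort, Multiset.card_map]; rfl
  have := sorted_countP_ge _ (Multiset.pairwise_sort (I.val.map εf) (·≤·)) k hk1
    (by rw [hlen]; exact hk2) r hr
  rwa [hlen] at this


end QTVD
/-- Deterministic local bias–variance decomposition.
Under the model `y = θ* + ε`, any quantile TVD solution `θ̂ ∈ S^τ` satisfies, at
every location `i`, the two-sided bound given by a min over outer intervals `J ∋ i`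
of a (positive bias) + (λ-dependent stochastic term) from above, and a max over
outer intervals of a (negative bias) + (stochastic term) from below. -/
theorem quantile_tvd_bias_variance_decomposition
    {n : ℕ} (τ lam : ℝ) (hτ0 : 0 < τ) (hτ1 : τ < 1) (hlam : 0 ≤ lam)
    (θstar ε : Fin n → ℝ) (θhat : Fin n → ℝ)
    (hθ : θhat ∈ QTVD.sol τ lam (fun j => θstar j + ε j)) (i : Fin n) :
    (((θhat i - θstar i : ℝ) : EReal) ≤
      ⨅ (a : Fin n) (b : Fin n) (hai : a ≤ i) (hib : i ≤ b),
        ((((Finset.Icc a b).sup' ⟨i, Finset.mem_Icc.mpr ⟨hai, hib⟩⟩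
            (fun k => θstar k - θstar i) : ℝ) : EReal)
          + ⨆ (c : Fin n) (d : Fin n) (_ : a ≤ c) (_ : c ≤ i) (_ : i ≤ d) (_ : d ≤ b),
              QTVD.orderStat ε (Finset.Icc c d)
                (⌊QTVD.uIJ τ lam n (c : ℕ) (d : ℕ) (a : ℕ) (b : ℕ)⌋ + 1))) ∧
    ((⨆ (a : Fin n) (b : Fin n) (hai : a ≤ i) (hib : i ≤ b),
        ((((Finset.Icc a b).inf' ⟨i, Finset.mem_Icc.mpr ⟨hai, hib⟩⟩
            (fun k => θstar k - θstar i) : ℝ) : EReal)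
          + ⨅ (c : Fin n) (d : Fin n) (_ : a ≤ c) (_ : c ≤ i) (_ : i ≤ d) (_ : d ≤ b),
              QTVD.orderStat ε (Finset.Icc c d)
                ⌈QTVD.lIJ τ lam n (c : ℕ) (d : ℕ) (a : ℕ) (b : ℕ)⌉))
      ≤ ((θhat i - θstar i : ℝ) : EReal)) := by
  classical
  set y : Fin n → ℝ := fun j => θstar j + ε j with hy
  constructor
  · -- upper bound
    refine le_iInf fun a => le_iInf fun b => le_iInf fun hai => le_iInf fun hib => ?_
    set B : ℝ := (Finset.Icc a b).sup' ⟨i, Finset.mem_Icc.mpr ⟨hai, hib⟩⟩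
      (fun k => θstar k - θstar i) with hB
    set S : EReal := ⨆ (c : Fin n) (d : Fin n) (_ : a ≤ c) (_ : c ≤ i) (_ : i ≤ d) (_ : d ≤ b),
      QTVD.orderStat ε (Finset.Icc c d)
        (⌊QTVD.uIJ τ lam n (c : ℕ) (d : ℕ) (a : ℕ) (b : ℕ)⌋ + 1) with hSdef
    by_contra hcon
    rw [not_le] at hcon
    obtain ⟨c, d, hac, hci, hid, hdb, hIge, hLmax, hRmax⟩ :=
      QTVD.exists_maximal_interval θhat a b i hai hib (θhat i) le_rfl
    have hcdF : c ≤ d := le_trans hci hid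
    have hS : QTVD.orderStat ε (Finset.Icc c d)
        (⌊QTVD.uIJ τ lam n (c : ℕ) (d : ℕ) (a : ℕ) (b : ℕ)⌋ + 1) ≤ S := by
      rw [hSdef]
      apply le_iSup_of_le c; apply le_iSup_of_le d; apply le_iSup_of_le hac
      apply le_iSup_of_le hci; apply le_iSup_of_le hid; apply le_iSup_of_le hdb
      exact le_rfl
    have hlt : ((B : ℝ) : EReal) + QTVD.orderStat ε (Finset.Icc c d)
        (⌊QTVD.uIJ τ lam n (c : ℕ) (d : ℕ) (a : ℕ) (b : ℕ)⌋ + 1)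
        < ((θhat i - θstar i : ℝ) : EReal) :=
      lt_of_le_of_lt (add_le_add_right hS _) hcon
    set kZ : ℤ := ⌊QTVD.uIJ τ lam n (c : ℕ) (d : ℕ) (a : ℕ) (b : ℕ)⌋ + 1 with hkZ
    -- counting bound
    set σL : ℝ := if hc : 0 < (c:ℕ) then
        QTVD.signP (θhat ⟨(c:ℕ)-1, lt_of_le_of_lt (Nat.sub_le _ _) c.isLt⟩ - θhat c) else 0
      with hσL
    set σR : ℝ := if hd : (d:ℕ)+1 < n then QTVD.signP (θhat ⟨(d:ℕ)+1, hd⟩ - θhat d) else 0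
      with hσR
    have hA := QTVD.countA hlam y θhat hθ c d hcdF σL σR hσL hσR
    have hcmem : c ∈ Finset.Icc c d := Finset.mem_Icc.mpr ⟨le_refl c, hcdF⟩
    have hdmem : d ∈ Finset.Icc c d := Finset.mem_Icc.mpr ⟨hcdF, le_refl d⟩
    have hsig : σL + σR ≤ -2 * QTVD.Cconst n (c:ℕ) (d:ℕ) (a:ℕ) (b:ℕ) := by
      apply QTVD.sigma_le_C n (a:ℕ) (b:ℕ) (c:ℕ) (d:ℕ) σL σR
        (Fin.le_def.mp hac) (Fin.le_def.mp hcdF) (Fin.le_def.mp hdb) b.isLt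
      · intro h; rw [hσL, dif_neg (by omega)]
      · intro h
        rw [hσL, dif_pos (by omega)]
        apply QTVD.signP_of_neg
        have h1 := hLmax h
        have h2 := hIge c hcmem
        linarith
      · rw [hσL]; split_ifs
        · exact QTVD.signP_le_one _
        · norm_num
      · intro h; rw [hσR, dif_neg (by omega)]
      · intro h
        rw [hσR, dif_pos (by omega)]
        apply QTVD.signP_of_neg
        have h1 := hRmax h
        have h2 := hIge d hdmem
        linarith
      · rw [hσR]; split_ifs
        · exact QTVD.signP_le_one _
        · norm_num
    have hcard : ((Finset.Icc c d).card : ℝ) = ((d:ℕ) : ℝ) - ((c:ℕ) : ℝ) + 1 := by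
      have hle : (c:ℕ) ≤ (d:ℕ) := Fin.le_def.mp hcdF
      rw [Fin.card_Icc, Nat.cast_sub (by omega)]
      push_cast; ring
    set K := ((Finset.Icc c d).filter (fun j => y j < θhat j)).card with hK
    have hcu : (K : ℝ) ≤ QTVD.uIJ τ lam n (c:ℕ) (d:ℕ) (a:ℕ) (b:ℕ) := by
      rw [QTVD.uIJ]
      have h1 : lam * (σL + σR) ≤ lam * (-2 * QTVD.Cconst n (c:ℕ) (d:ℕ) (a:ℕ) (b:ℕ)) :=
        mul_le_mul_of_nonneg_left hsig hlam
      rw [hcard] at hA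
      nlinarith [hA]
    have hfloor : QTVD.uIJ τ lam n (c:ℕ) (d:ℕ) (a:ℕ) (b:ℕ) < (kZ : ℝ) := by
      rw [hkZ]; push_cast
      linarith [Int.lt_floor_add_one (QTVD.uIJ τ lam n (c:ℕ) (d:ℕ) (a:ℕ) (b:ℕ))]
    rcases le_or_gt kZ 0 with hk0 | hkpos
    · have h1 : ((kZ : ℤ) : ℝ) ≤ 0 := by exact_mod_cast hk0
      have h2 : (0:ℝ) ≤ (K : ℝ) := Nat.cast_nonneg K
      linarith
    rcases lt_or_ge (((Finset.Icc c d).card : ℕ) : ℤ) kZ with hbig | hok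
    · have htop : QTVD.orderStat ε (Finset.Icc c d) kZ = ⊤ := by
        rw [QTVD.orderStat, if_neg (by omega), if_pos hbig]
      rw [htop] at hlt
      rw [EReal.coe_add_top] at hlt
      exact absurd hlt (by simp)
    · set r : ℝ := (((Finset.Icc c d).val.map ε).sort (· ≤ ·)).getD (kZ.toNat - 1) 0 with hr
      have hos : QTVD.orderStat ε (Finset.Icc c d) kZ = (r : EReal) := by
        rw [QTVD.orderStat, if_neg (by omega), if_neg (by omega)]
      rw [hos] at hlt
      have hBr : B + r < θhat i - θstar i := by
        rw [← EReal.coe_add] at hlt; exact_mod_cast hlt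
      have hsub : (Finset.Icc c d).filter (fun j => ε j ≤ r) ⊆
          (Finset.Icc c d).filter (fun j => y j < θhat j) := by
        intro j hj
        rw [Finset.mem_filter] at hj ⊢
        refine ⟨hj.1, ?_⟩
        have hjcd := Finset.mem_Icc.mp hj.1
        have hjab : j ∈ Finset.Icc a b :=
          Finset.mem_Icc.mpr ⟨le_trans hac hjcd.1, le_trans hjcd.2 hdb⟩
        have hBj : θstar j - θstar i ≤ B := by
          rw [hB]; exact Finset.le_sup' (fun k => θstar k - θstar i) hjab
        have hθj : θhat i ≤ θhat j := hIge j hj.1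
        have hyj : y j = θstar j + ε j := by rw [hy]
        rw [hyj]
        linarith [hj.2]
      have hcount := QTVD.card_le_filter_le ε (Finset.Icc c d) kZ.toNat
        (by omega) (by omega) r hr
      have hKge : kZ.toNat ≤ K := le_trans hcount (Finset.card_le_card hsub)
      have hcast : ((kZ.toNat : ℕ) : ℝ) = (kZ : ℝ) := by
        exact_mod_cast Int.toNat_of_nonneg (by omega)
      have hKge' : (kZ : ℝ) ≤ (K : ℝ) := by
        rw [← hcast]; exact_mod_cast hKge
      linarith
  · -- lower bound
    refine iSup_le fun a => iSup_le fun b => iSup_le fun hai => iSup_le fun hib => ?_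
    set B : ℝ := (Finset.Icc a b).inf' ⟨i, Finset.mem_Icc.mpr ⟨hai, hib⟩⟩
      (fun k => θstar k - θstar i) with hB
    set T : EReal := ⨅ (c : Fin n) (d : Fin n) (_ : a ≤ c) (_ : c ≤ i) (_ : i ≤ d) (_ : d ≤ b),
      QTVD.orderStat ε (Finset.Icc c d)
        ⌈QTVD.lIJ τ lam n (c : ℕ) (d : ℕ) (a : ℕ) (b : ℕ)⌉ with hTdef
    by_contra hcon
    rw [not_le] at hcon
    obtain ⟨c, d, hac, hci, hid, hdb, hIge, hLmax, hRmax⟩ :=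
      QTVD.exists_maximal_interval (fun j => -θhat j) a b i hai hib (-(θhat i)) le_rfl
    have hcdF : c ≤ d := le_trans hci hid
    have hT : T ≤ QTVD.orderStat ε (Finset.Icc c d)
        ⌈QTVD.lIJ τ lam n (c : ℕ) (d : ℕ) (a : ℕ) (b : ℕ)⌉ := by
      rw [hTdef]
      exact iInf_le_of_le c (iInf_le_of_le d (iInf_le_of_le hac (iInf_le_of_le hci
        (iInf_le_of_le hid (iInf_le_of_le hdb le_rfl)))))
    have hlt : ((θhat i - θstar i : ℝ) : EReal) < ((B : ℝ) : EReal)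
        + QTVD.orderStat ε (Finset.Icc c d)
          ⌈QTVD.lIJ τ lam n (c : ℕ) (d : ℕ) (a : ℕ) (b : ℕ)⌉ :=
      lt_of_lt_of_le hcon (add_le_add_right hT _)
    set kZ : ℤ := ⌈QTVD.lIJ τ lam n (c : ℕ) (d : ℕ) (a : ℕ) (b : ℕ)⌉ with hkZ
    set σL : ℝ := if hc : 0 < (c:ℕ) then
        QTVD.signP (θhat c - θhat ⟨(c:ℕ)-1, lt_of_le_of_lt (Nat.sub_le _ _) c.isLt⟩) else 0
      with hσL
    set σR : ℝ := if hd : (d:ℕ)+1 < n then QTVD.signP (θhat d - θhat ⟨(d:ℕ)+1, hd⟩) else 0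
      with hσR
    have hA := QTVD.countB hlam y θhat hθ c d hcdF σL σR hσL hσR
    have hcmem : c ∈ Finset.Icc c d := Finset.mem_Icc.mpr ⟨le_refl c, hcdF⟩
    have hdmem : d ∈ Finset.Icc c d := Finset.mem_Icc.mpr ⟨hcdF, le_refl d⟩
    have hsig : σL + σR ≤ -2 * QTVD.Cconst n (c:ℕ) (d:ℕ) (a:ℕ) (b:ℕ) := by
      apply QTVD.sigma_le_C n (a:ℕ) (b:ℕ) (c:ℕ) (d:ℕ) σL σR
        (Fin.le_def.mp hac) (Fin.le_def.mp hcdF) (Fin.le_def.mp hdb) b.isLt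
      · intro h; rw [hσL, dif_neg (by omega)]
      · intro h
        rw [hσL, dif_pos (by omega)]
        apply QTVD.signP_of_neg
        have h1 : -θhat ⟨(c:ℕ)-1, lt_of_le_of_lt (Nat.sub_le _ _) c.isLt⟩ < -(θhat i) := hLmax h
        have h2 : -(θhat i) ≤ -θhat c := hIge c hcmem
        linarith
      · rw [hσL]; split_ifs
        · exact QTVD.signP_le_one _
        · norm_num
      · intro h; rw [hσR, dif_neg (by omega)]
      · intro h
        rw [hσR, dif_pos (by omega)]
        apply QTVD.signP_of_neg
        have h1 : -θhat ⟨(d:ℕ)+1, Nat.lt_of_le_of_lt (Nat.succ_le_of_lt h) b.isLt⟩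
            < -(θhat i) := hRmax h
        have h2 : -(θhat i) ≤ -θhat d := hIge d hdmem
        linarith
      · rw [hσR]; split_ifs
        · exact QTVD.signP_le_one _
        · norm_num
    have hcard : ((Finset.Icc c d).card : ℝ) = ((d:ℕ) : ℝ) - ((c:ℕ) : ℝ) + 1 := by
      have hle : (c:ℕ) ≤ (d:ℕ) := Fin.le_def.mp hcdF
      rw [Fin.card_Icc, Nat.cast_sub (by omega)]
      push_cast; ring
    set K := ((Finset.Icc c d).filter (fun j => θhat j < y j)).card with hK
    have hcu : (K : ℝ) ≤ ((Finset.Icc c d).card : ℝ)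
        - QTVD.lIJ τ lam n (c:ℕ) (d:ℕ) (a:ℕ) (b:ℕ) := by
      rw [QTVD.lIJ]
      have h1 : lam * (σL + σR) ≤ lam * (-2 * QTVD.Cconst n (c:ℕ) (d:ℕ) (a:ℕ) (b:ℕ)) :=
        mul_le_mul_of_nonneg_left hsig hlam
      rw [hcard] at hA
      rw [hcard]
      nlinarith [hA]
    have hceil : (kZ : ℝ) < QTVD.lIJ τ lam n (c:ℕ) (d:ℕ) (a:ℕ) (b:ℕ) + 1 := by
      rw [hkZ]
      exact_mod_cast Int.ceil_lt_add_one (QTVD.lIJ τ lam n (c:ℕ) (d:ℕ) (a:ℕ) (b:ℕ))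
    rcases le_or_gt kZ 0 with hk0 | hkpos
    · have hbot : QTVD.orderStat ε (Finset.Icc c d) kZ = ⊥ := by
        rw [QTVD.orderStat, if_pos hk0]
      rw [hbot] at hlt
      have hb2 : ((B : ℝ) : EReal) + (⊥ : EReal) = ⊥ := by simp
      rw [hb2] at hlt
      exact absurd hlt (by simp)
    rcases lt_or_ge (((Finset.Icc c d).card : ℕ) : ℤ) kZ with hbig | hok
    · have hlc : ((Finset.Icc c d).card : ℝ) < QTVD.lIJ τ lam n (c:ℕ) (d:ℕ) (a:ℕ) (b:ℕ) := by
        by_contra hnot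
        push_neg at hnot
        have : kZ ≤ (((Finset.Icc c d).card : ℕ) : ℤ) := by
          rw [hkZ]
          exact Int.ceil_le.mpr (by exact_mod_cast hnot)
        omega
      have h2 : (0:ℝ) ≤ (K : ℝ) := Nat.cast_nonneg K
      linarith
    · set r : ℝ := (((Finset.Icc c d).val.map ε).sort (· ≤ ·)).getD (kZ.toNat - 1) 0 with hr
      have hos : QTVD.orderStat ε (Finset.Icc c d) kZ = (r : EReal) := by
        rw [QTVD.orderStat, if_neg (by omega), if_neg (by omega)]
      rw [hos] at hlt
      have hBr : θhat i - θstar i < B + r := by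
        rw [← EReal.coe_add] at hlt; exact_mod_cast hlt
      have hsub : (Finset.Icc c d).filter (fun j => r ≤ ε j) ⊆
          (Finset.Icc c d).filter (fun j => θhat j < y j) := by
        intro j hj
        rw [Finset.mem_filter] at hj ⊢
        refine ⟨hj.1, ?_⟩
        have hjcd := Finset.mem_Icc.mp hj.1
        have hjab : j ∈ Finset.Icc a b :=
          Finset.mem_Icc.mpr ⟨le_trans hac hjcd.1, le_trans hjcd.2 hdb⟩
        have hBj : B ≤ θstar j - θstar i := by
          rw [hB]; exact Finset.inf'_le (fun k => θstar k - θstar i) hjab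
        have hθj : -(θhat i) ≤ -θhat j := hIge j hj.1
        have hyj : y j = θstar j + ε j := by rw [hy]
        rw [hyj]
        linarith [hj.2]
      have hcount := QTVD.card_le_filter_ge ε (Finset.Icc c d) kZ.toNat
        (by omega) (by omega) r hr
      have hKge : (Finset.Icc c d).card - (kZ.toNat - 1) ≤ K :=
        le_trans hcount (Finset.card_le_card hsub)
      have hcast : ((kZ.toNat : ℕ) : ℝ) = (kZ : ℝ) := by
        exact_mod_cast Int.toNat_of_nonneg (by omega)
      have hKge' : ((Finset.Icc c d).card : ℝ) - ((kZ : ℝ) - 1) ≤ (K : ℝ) := by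
        have h1 : (kZ.toNat - 1 : ℕ) ≤ (Finset.Icc c d).card := by omega
        have h2 : ((((Finset.Icc c d).card - (kZ.toNat - 1) : ℕ)) : ℝ)
            = ((Finset.Icc c d).card : ℝ) - ((kZ : ℝ) - 1) := by
          rw [Nat.cast_sub h1, Nat.cast_sub (by omega : 1 ≤ kZ.toNat)]
          rw [hcast]
          norm_num
        rw [← h2]
        exact_mod_cast hKge
      linarith
end
end
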